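/- For every positive integer k there exists a positive integer N such that for all n ≥ N, p_{n+1}^k < p_1 · p_2 · ⋯ · p_n, where p_i denotes the i-th prime. -/

import Mathlib

lemma nth_prime_succ_le_two_mul (n : ℕ) :
    Nat.nth Nat.Prime (n + 1) ≤ 2 * Nat.nth Nat.Prime n := by
  obtain ⟨p, hp, hlt, hle⟩ := Nat.exists_prime_lt_and_le_two_mul (Nat.nth Nat.Prime n)
    (Nat.Prime.ne_zero (Nat.prime_nth_prime n))
  refine le_trans ?_ hle
  by_contra h
  push_neg at h
  exact absurd (Nat.le_nth_of_lt_nth_succ h hp) (not_le.mpr hlt)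

lemma nth_prime_le_two_pow (n : ℕ) : Nat.nth Nat.Prime n ≤ 2 ^ (n + 1) := by
  induction n with
  | zero => simp [Nat.nth_prime_zero_eq_two]
  | succ n ih =>
    calc Nat.nth Nat.Prime (n + 1) ≤ 2 * Nat.nth Nat.Prime n := nth_prime_succ_le_two_mul n
    _ ≤ 2 * 2 ^ (n + 1) := by omega
    _ = 2 ^ (n + 2) := by ring

lemma factorial_le_primorial (n : ℕ) :
    Nat.factorial (n + 1) ≤ ∏ i ∈ Finset.range n, Nat.nth Nat.Prime i := by
  induction n with
  | zero => simp
  | succ n ih =>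
    rw [Finset.prod_range_succ, Nat.factorial_succ]
    exact Nat.mul_le_mul (Nat.add_two_le_nth_prime n) ih |>.trans_eq (mul_comm _ _) |>.trans_eq rfl

theorem stmt_3 (k : ℕ) (hk : 0 < k) :
    ∃ N : ℕ, 0 < N ∧ ∀ n ≥ N,
      (Nat.nth Nat.Prime n) ^ k < ∏ i ∈ Finset.range n, Nat.nth Nat.Prime i := by
  obtain ⟨n0, hfac⟩ := Filter.eventually_atTop.mp (Nat.eventually_pow_lt_factorial_sub (2 ^ k) 1)
  refine ⟨n0 + 1, Nat.succ_pos _, fun n hn => ?_⟩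
  have h1 : Nat.nth Nat.Prime n ^ k ≤ (2 ^ k) ^ (n + 1) := by
    calc Nat.nth Nat.Prime n ^ k ≤ (2 ^ (n + 1)) ^ k :=
      Nat.pow_le_pow_left (nth_prime_le_two_pow n) k
    _ = (2 ^ k) ^ (n + 1) := by rw [← pow_mul, ← pow_mul, mul_comm]
  have h2 : (2 ^ k) ^ (n + 1) ≤ (2 ^ k) ^ (n + 2) :=
    Nat.pow_le_pow_right (by positivity) (by omega)
  have h3 : (2 ^ k) ^ (n + 2) < Nat.factorial (n + 1) := by
    have := hfac (n + 2) (by omega)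
    simpa using this
  calc Nat.nth Nat.Prime n ^ k ≤ (2 ^ k) ^ (n + 2) := h1.trans h2
  _ < Nat.factorial (n + 1) := h3
  _ ≤ ∏ i ∈ Finset.range n, Nat.nth Nat.Prime i := factorial_le_primorial n
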